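/- arXiv:2007.10266 — 2 statements merged into one kernel-verified Lean document; each statement's English description precedes it below -/
import Mathlib

section
/- Let υ ∈ C_c^∞(ℝ) satisfy 0 ≤ υ(x) ≤ 1 for all x ∈ ℝ and υ(x) = 1 for |x| ≤ 1, and for n ∈ ℕ set υ_n(x) := υ(x/n). If a ∈ C_0(ℝ) has bounded variation V(a) < ∞, then ‖a − υ_n a‖_{L^∞(ℝ)} + V(a − υ_n a) → 0 as n → ∞. -/
open Filter Topology Set
open scoped ENNReal NNReal

lemma myMul_le (f : ℝ → ℝ) (g : ℝ → ℂ) (s : Set ℝ) (Cf Cg : ℝ≥0)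
    (hf : ∀ x ∈ s, ‖f x‖₊ ≤ Cf) (hg : ∀ x ∈ s, ‖g x‖₊ ≤ Cg) :
    eVariationOn (fun x => (f x : ℂ) * g x) s ≤
      (Cf : ℝ≥0∞) * eVariationOn g s + (Cg : ℝ≥0∞) * eVariationOn f s := by
  refine iSup_le ?_
  rintro ⟨n, u, hu, us⟩
  calc ∑ i ∈ Finset.range n, edist ((f (u (i+1)) : ℂ) * g (u (i+1))) ((f (u i) : ℂ) * g (u i))
      ≤ ∑ i ∈ Finset.range n, ((Cf : ℝ≥0∞) * edist (g (u (i+1))) (g (u i))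
          + (Cg : ℝ≥0∞) * edist (f (u (i+1))) (f (u i))) := by
        refine Finset.sum_le_sum fun i _ => ?_
        set x := u (i+1); set y := u i
        have hxy : (f x : ℂ) * g x - (f y : ℂ) * g y
            = (f x : ℂ) * (g x - g y) + ((f x - f y : ℝ) : ℂ) * g y := by push_cast; ring
        simp only [edist_nndist, nndist_eq_nnnorm]; rw [hxy]
        calc (‖(f x : ℂ) * (g x - g y) + ((f x - f y : ℝ) : ℂ) * g y‖₊ : ℝ≥0∞)
            ≤ (‖(f x : ℂ) * (g x - g y)‖₊ : ℝ≥0∞) + ‖((f x - f y : ℝ) : ℂ) * g y‖₊ := by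
              exact_mod_cast nnnorm_add_le _ _
          _ = (‖f x‖₊ : ℝ≥0∞) * ‖g x - g y‖₊ + (‖g y‖₊ : ℝ≥0∞) * ‖f x - f y‖₊ := by
              rw [nnnorm_mul, nnnorm_mul, Complex.nnnorm_real, Complex.nnnorm_real,
                ENNReal.coe_mul, ENNReal.coe_mul, mul_comm ((‖f x - f y‖₊ : ℝ≥0∞))]
          _ ≤ (Cf : ℝ≥0∞) * ‖g x - g y‖₊ + (Cg : ℝ≥0∞) * ‖f x - f y‖₊ := by
              gcongr
              · exact_mod_cast hf x (us (i+1))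
              · exact_mod_cast hg y (us i)
    _ = (Cf : ℝ≥0∞) * ∑ i ∈ Finset.range n, edist (g (u (i+1))) (g (u i))
          + (Cg : ℝ≥0∞) * ∑ i ∈ Finset.range n, edist (f (u (i+1))) (f (u i)) := by
        rw [Finset.sum_add_distrib, Finset.mul_sum, Finset.mul_sum]
    _ ≤ _ := add_le_add (mul_le_mul_right (eVariationOn.sum_le (f := g) (n := n) hu us) _)
          (mul_le_mul_right (eVariationOn.sum_le (f := f) (n := n) hu us) _)

lemma mySplit3 (g : ℝ → ℂ) {c : ℝ} (hc : 0 ≤ c) :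
    eVariationOn g univ = eVariationOn g (Iic (-c)) + eVariationOn g (Icc (-c) c)
      + eVariationOn g (Ici c) := by
  have h1 : (univ : Set ℝ) = Iic (-c) ∪ Ici (-c) := (Set.Iic_union_Ici).symm
  have h2 : (Ici (-c) : Set ℝ) = Icc (-c) c ∪ Ici c := (Set.Icc_union_Ici_eq_Ici (by linarith)).symm
  rw [h1, eVariationOn.union g isGreatest_Iic isLeast_Ici, h2,
    eVariationOn.union g (isGreatest_Icc (by linarith)) isLeast_Ici, add_assoc]

lemma myiSup (g : ℝ → ℂ) :
    eVariationOn g univ = ⨆ n : ℕ, eVariationOn g (Icc (-(n : ℝ)) n) := by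
  apply le_antisymm
  · refine iSup_le ?_
    rintro ⟨m, u, hu, -⟩
    obtain ⟨N, hN⟩ := exists_nat_ge (max (-(u 0)) (u m))
    refine le_iSup_of_le N ?_
    set v : ℕ → ℝ := fun i => u (min i m) with hv
    have hveq : ∀ i ∈ Finset.range m,
        edist (g (u (i+1))) (g (u i)) = edist (g (v (i+1))) (g (v i)) := by
      intro i hi
      rw [Finset.mem_range] at hi
      simp only [hv, Nat.min_eq_left hi.le, Nat.min_eq_left hi]
    rw [Finset.sum_congr rfl hveq]
    refine eVariationOn.sum_le (f := g) (n := m) (fun i j hij => hu (min_le_min hij le_rfl)) fun i => ?_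
    constructor
    · have : -(u 0) ≤ (N : ℝ) := le_trans (le_max_left _ _) hN
      have h0 : u 0 ≤ u (min i m) := hu (Nat.zero_le _)
      linarith
    · have : u m ≤ (N : ℝ) := le_trans (le_max_right _ _) hN
      exact le_trans (hu (min_le_right i m)) this
  · exact iSup_le fun n => eVariationOn.mono g (subset_univ _)

lemma myTail (a : ℝ → ℂ) (haV : eVariationOn a univ ≠ ⊤) {ε : ℝ≥0∞} (hε : 0 < ε) :
    ∃ N : ℕ, ∀ n : ℕ, N ≤ n →
      eVariationOn a (Iic (-(n : ℝ))) + eVariationOn a (Ici (n : ℝ)) ≤ ε := by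
  set L := eVariationOn a univ with hL
  have key : ∃ N : ℕ, L ≤ eVariationOn a (Icc (-(N : ℝ)) N) + ε := by
    by_cases h : L ≤ ε
    · exact ⟨0, h.trans le_add_self⟩
    · push_neg at h
      have hL0 : L ≠ 0 := fun h0 => (h0 ▸ h).not_ge (zero_le (a := ε))
      have hlt : L - ε < L := ENNReal.sub_lt_self haV hL0 hε.ne'
      have hlt2 : L - ε < ⨆ n : ℕ, eVariationOn a (Icc (-(n : ℝ)) n) :=
        hlt.trans_le (myiSup a).le
      obtain ⟨N, hN⟩ := lt_iSup_iff.mp hlt2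
      exact ⟨N, tsub_le_iff_right.mp hN.le |>.trans (by rw [add_comm])⟩
  obtain ⟨N, hN⟩ := key
  refine ⟨N, fun n hn => ?_⟩
  have hsplit := mySplit3 a (n.cast_nonneg : (0:ℝ) ≤ n)
  have hmono : eVariationOn a (Icc (-(N : ℝ)) N) ≤ eVariationOn a (Icc (-(n : ℝ)) n) :=
    eVariationOn.mono a (Icc_subset_Icc (by exact_mod_cast neg_le_neg (Nat.cast_le.mpr hn))
      (by exact_mod_cast hn))
  have hfin : eVariationOn a (Icc (-(n : ℝ)) n) ≠ ⊤ := by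
    refine ne_top_of_le_ne_top haV (eVariationOn.mono a (subset_univ _))
  have : (eVariationOn a (Iic (-(n : ℝ))) + eVariationOn a (Ici (n : ℝ)))
      + eVariationOn a (Icc (-(n : ℝ)) n) ≤ ε + eVariationOn a (Icc (-(n : ℝ)) n) := by
    calc _ = L := by rw [hL, hsplit]; ring
      _ ≤ eVariationOn a (Icc (-(N : ℝ)) N) + ε := hN
      _ ≤ _ := by rw [add_comm]; exact add_le_add_right hmono ε
  exact (ENNReal.add_le_add_iff_right hfin).mp this

lemma myOneSub (h : ℝ → ℝ) (s : Set ℝ) :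
    eVariationOn (fun x => 1 - h x) s ≤ eVariationOn h s := by
  have l1 : LipschitzWith 1 (fun y : ℝ => 1 - y) := by
    refine LipschitzWith.of_dist_le_mul fun x y => ?_
    rw [Real.dist_eq, Real.dist_eq]
    have h1 : (1:ℝ) - x - (1 - y) = -(x - y) := by ring
    rw [h1, abs_neg, NNReal.coe_one, one_mul]
  simpa [Function.comp_def] using (l1.lipschitzOnWith (s := univ)).comp_eVariationOn_le (mapsTo_univ h s)

lemma myUpsFin (υ : ℝ → ℝ) (hs : ContDiff ℝ (⊤ : ℕ∞) υ) (hc : HasCompactSupport υ) :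
    eVariationOn υ (Ici (1:ℝ)) ≠ ⊤ ∧ eVariationOn υ (Iic (-1:ℝ)) ≠ ⊤ := by
  have hd1 : Differentiable ℝ υ := hs.differentiable (by norm_num)
  have hdc : Continuous (deriv υ) := hs.continuous_deriv (by norm_num)
  obtain ⟨K, hK⟩ := hc.deriv.exists_bound_of_continuous hdc
  have hK0 : 0 ≤ K := (norm_nonneg _).trans (hK 0)
  have hlip : LipschitzWith K.toNNReal υ := by
    refine lipschitzWith_of_nnnorm_deriv_le hd1 fun x => ?_
    rw [← NNReal.coe_le_coe, coe_nnnorm, Real.coe_toNNReal K hK0]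
    exact hK x
  obtain ⟨R, hR0, hR⟩ : ∃ R : ℝ, 0 ≤ R ∧ tsupport υ ⊆ Icc (-R) R := by
    obtain ⟨R, hR⟩ := (hc.isBounded).subset_closedBall 0
    refine ⟨max R 0, le_max_right _ _, fun x hx => ?_⟩
    have := hR hx
    rw [Metric.mem_closedBall, Real.dist_0_eq_abs] at this
    constructor <;> [skip; skip] <;>
      · have h1 : |x| ≤ max R 0 := this.trans (le_max_left _ _)
        rw [abs_le] at h1
        first | exact h1.1 | exact h1.2
  have hid : ∀ p q : ℝ, eVariationOn υ (Icc p q) ≠ ⊤ := by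
    intro p q
    have h1 : eVariationOn (id : ℝ → ℝ) (Icc p q) ≤ ENNReal.ofReal (q - p) := by
      rcases le_or_gt p q with hpq | hpq
      · have := MonotoneOn.eVariationOn_le (f := (id : ℝ → ℝ)) (s := (univ : Set ℝ))
          (monotoneOn_id) (a := p) (b := q) trivial trivial
        simpa using this
      · rw [Icc_eq_empty hpq.not_ge]
        simp [eVariationOn.subsingleton]
    have h2 : eVariationOn υ (Icc p q) ≤ K.toNNReal * eVariationOn (id : ℝ → ℝ) (Icc p q) :=
      (hlip.lipschitzOnWith (s := univ)).comp_eVariationOn_le (mapsTo_univ _ _)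
    exact ne_top_of_le_ne_top (ENNReal.mul_ne_top ENNReal.coe_ne_top
      (ne_top_of_le_ne_top ENNReal.ofReal_ne_top h1)) h2
  have hzero : ∀ s : Set ℝ, (∀ x ∈ s, x ∉ Icc (-R) R) → eVariationOn υ s = 0 := by
    intro s hsR
    refine eVariationOn.constant_on ?_
    rintro - ⟨x, hx, rfl⟩ - ⟨y, hy, rfl⟩
    rw [image_eq_zero_of_notMem_tsupport (fun hmem => hsR x hx (hR hmem)),
      image_eq_zero_of_notMem_tsupport (fun hmem => hsR y hy (hR hmem))]
  constructor
  · have hsplit : eVariationOn υ (Ici (1:ℝ)) = eVariationOn υ (Icc 1 (R+1))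
        + eVariationOn υ (Ici (R+1)) := by
      rw [← eVariationOn.union υ (isGreatest_Icc (by linarith)) isLeast_Ici,
        Set.Icc_union_Ici_eq_Ici (by linarith)]
    rw [hsplit, hzero (Ici (R+1)) (fun x hx hmem => by
      rw [mem_Ici] at hx; rw [mem_Icc] at hmem; linarith)]
    simpa using hid 1 (R+1)
  · have hsplit : eVariationOn υ (Iic (-1:ℝ)) = eVariationOn υ (Iic (-(R+1)))
        + eVariationOn υ (Icc (-(R+1)) (-1)) := by
      rw [← eVariationOn.union υ isGreatest_Iic (isLeast_Icc (by linarith)),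
        Set.Iic_union_Icc_eq_Iic (by linarith)]
    rw [hsplit, hzero (Iic (-(R+1))) (fun x hx hmem => by
      rw [mem_Iic] at hx; rw [mem_Icc] at hmem; linarith)]
    simpa using hid (-(R+1)) (-1)

lemma myBound (a : ℝ → ℂ) (ha0 : Tendsto a (cocompact ℝ) (nhds 0)) {ε : ℝ} (hε : 0 < ε) :
    ∃ M : ℝ, 0 ≤ M ∧ ∀ x : ℝ, M ≤ |x| → ‖a x‖ ≤ ε := by
  have h1 := Metric.tendsto_nhds.mp ha0 ε hε
  rw [Filter.hasBasis_cocompact.eventually_iff] at h1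
  obtain ⟨K, hK, hKs⟩ := h1
  obtain ⟨r, hr⟩ := hK.isBounded.subset_closedBall 0
  refine ⟨max r 0 + 1, by positivity, fun x hx => ?_⟩
  have hxK : x ∈ Kᶜ := by
    intro hmem
    have h2 := hr hmem
    rw [Metric.mem_closedBall, Real.dist_0_eq_abs] at h2
    have := le_max_left r 0
    linarith
  have h3 := hKs hxK
  rw [dist_zero_right] at h3
  exact h3.le

/-- If `υ` is a smooth compactly supported function with `0 ≤ υ ≤ 1` and `υ = 1` on
`[-1, 1]`, `υ_n(x) := υ(x/n)`, and `a ∈ C₀(ℝ)` has bounded variation, then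
`‖a - υ_n a‖_∞ + V(a - υ_n a) → 0` as `n → ∞`. -/
theorem stmt1 (υ : ℝ → ℝ) (hυ_smooth : ContDiff ℝ (⊤ : ℕ∞) υ)
    (hυ_supp : HasCompactSupport υ)
    (hυ01 : ∀ x : ℝ, 0 ≤ υ x ∧ υ x ≤ 1) (hυ1 : ∀ x : ℝ, |x| ≤ 1 → υ x = 1)
    (a : ℝ → ℂ) (ha : Continuous a) (ha0 : Tendsto a (cocompact ℝ) (nhds 0))
    (haV : eVariationOn a Set.univ ≠ ⊤) :
    Tendsto
      (fun n : ℕ =>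
        ENNReal.ofReal (⨆ x : ℝ, ‖a x - (υ (x / n) : ℂ) * a x‖) +
          eVariationOn (fun x : ℝ => a x - (υ (x / n) : ℂ) * a x) Set.univ)
      atTop (nhds 0) := by
  rw [ENNReal.tendsto_nhds_zero]
  intro ε hε
  obtain ⟨hCr, hCl⟩ := myUpsFin υ hυ_smooth hυ_supp
  set Cr := eVariationOn υ (Ici (1:ℝ)) with hCrdef
  set Cl := eVariationOn υ (Iic (-1:ℝ)) with hCldef
  have hClCr : Cl + Cr ≠ ⊤ := ENNReal.add_ne_top.mpr ⟨hCl, hCr⟩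
  set η : ℝ≥0∞ := (ε/2/2) / (Cl + Cr + 1) with hηdef
  have hε4 : 0 < ε/2/2 := ENNReal.half_pos (ENNReal.half_pos hε.ne').ne'
  have hηpos : 0 < η := ENNReal.div_pos hε4.ne' (by
    exact ENNReal.add_ne_top.mpr ⟨hClCr, ENNReal.one_ne_top⟩)
  have hηmul : η * (Cl + Cr) ≤ ε/2/2 := by
    calc η * (Cl + Cr) ≤ η * (Cl + Cr + 1) := mul_le_mul_right le_self_add η
      _ = ε/2/2 := ENNReal.div_mul_cancel (by simp) (ENNReal.add_ne_top.mpr ⟨hClCr, ENNReal.one_ne_top⟩)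
  set δ : ℝ≥0∞ := min 1 (min η (ε/2)) with hδdef
  have hδpos : 0 < δ := lt_min one_pos (lt_min hηpos (ENNReal.half_pos hε.ne'))
  have hδtop : δ ≠ ⊤ := ne_top_of_le_ne_top ENNReal.one_ne_top (min_le_left _ _)
  set δr : ℝ := δ.toReal with hδrdef
  have hδr : 0 < δr := ENNReal.toReal_pos hδpos.ne' hδtop
  have hδof : ENNReal.ofReal δr = δ := ENNReal.ofReal_toReal hδtop
  obtain ⟨M, hM0, hM⟩ := myBound a ha0 hδr
  obtain ⟨N₁, hN₁⟩ := exists_nat_ge (max M 1)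
  obtain ⟨N₂, hN₂⟩ := myTail a haV hε4
  filter_upwards [eventually_ge_atTop N₁, eventually_ge_atTop N₂] with n hn1 hn2
  have hnM : max M 1 ≤ (n : ℝ) := hN₁.trans (by exact_mod_cast hn1)
  have hn0 : (0:ℝ) < n := lt_of_lt_of_le one_pos ((le_max_right M 1).trans hnM)
  have hMn : M ≤ (n:ℝ) := (le_max_left M 1).trans hnM
  -- b_n vanishes on [-n, n]
  have hb0 : ∀ x : ℝ, |x| ≤ (n:ℝ) → a x - (υ (x / n) : ℂ) * a x = 0 := by
    intro x hx
    have h1 : |x / n| ≤ 1 := by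
      rw [abs_div, abs_of_pos hn0]
      exact div_le_one_of_le₀ hx hn0.le
    rw [hυ1 _ h1]
    push_cast
    ring
  -- tail norm bound
  have hax : ∀ x : ℝ, (n:ℝ) ≤ |x| → ‖a x‖ ≤ δr := fun x hx => hM x (hMn.trans hx)
  -- Part A
  have hA : ENNReal.ofReal (⨆ x : ℝ, ‖a x - (υ (x / n) : ℂ) * a x‖) ≤ ε/2 := by
    have hsup : (⨆ x : ℝ, ‖a x - (υ (x / n) : ℂ) * a x‖) ≤ δr := by
      refine Real.iSup_le (fun x => ?_) hδr.le
      rcases le_or_gt (|x|) n with h | h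
      · rw [hb0 x h]; simpa using hδr.le
      · have h2 : ‖a x‖ ≤ δr := hax x h.le
        have h3 : a x - (υ (x / n) : ℂ) * a x = ((1 - υ (x / n) : ℝ) : ℂ) * a x := by
          push_cast; ring
        rw [h3, norm_mul, Complex.norm_real, Real.norm_eq_abs]
        have h4 : |1 - υ (x / n)| ≤ 1 := by
          obtain ⟨hu0, hu1⟩ := hυ01 (x / n)
          rw [abs_le]; constructor <;> linarith
        calc |1 - υ (x / n)| * ‖a x‖ ≤ 1 * δr := by
              apply mul_le_mul h4 h2 (norm_nonneg _) zero_le_one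
          _ = δr := one_mul _
    calc ENNReal.ofReal (⨆ x : ℝ, ‖a x - (υ (x / n) : ℂ) * a x‖)
        ≤ ENNReal.ofReal δr := ENNReal.ofReal_le_ofReal hsup
      _ = δ := hδof
      _ ≤ ε/2 := (min_le_right _ _).trans (min_le_right _ _)
  -- Part B
  have hfun : (fun x : ℝ => a x - (υ (x / n) : ℂ) * a x)
      = fun x : ℝ => ((1 - υ (x / n) : ℝ) : ℂ) * a x := by
    funext x; push_cast; ring
  set δn : ℝ≥0 := δr.toNNReal with hδndef
  have hδn : (δn : ℝ≥0∞) = δ := hδof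
  have hmono : Monotone (fun x : ℝ => x / n) := monotone_id.div_const hn0.le
  have hone : ∀ s : Set ℝ, ∀ x ∈ s, ‖1 - υ (x / n)‖₊ ≤ (1 : ℝ≥0) := by
    intro s x _
    rw [← NNReal.coe_le_coe, coe_nnnorm, NNReal.coe_one, Real.norm_eq_abs]
    obtain ⟨hu0, hu1⟩ := hυ01 (x / n)
    rw [abs_le]; constructor <;> linarith
  have hVn : ∀ (s : Set ℝ) (t : Set ℝ), MapsTo (fun x : ℝ => x / n) s t →
      eVariationOn (fun x : ℝ => (1 - υ (x / n) : ℝ)) s ≤ eVariationOn υ t := by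
    intro s t hst
    calc eVariationOn (fun x : ℝ => (1 - υ (x / n) : ℝ)) s
        ≤ eVariationOn (fun x : ℝ => υ (x / n)) s := myOneSub _ s
      _ ≤ eVariationOn υ t := eVariationOn.comp_le_of_monotoneOn υ _ (hmono.monotoneOn s) hst
  have hB : eVariationOn (fun x : ℝ => a x - (υ (x / n) : ℂ) * a x) univ ≤ ε/2 := by
    rw [hfun, mySplit3 _ (Nat.cast_nonneg n : (0:ℝ) ≤ n)]
    have hmid : eVariationOn (fun x : ℝ => ((1 - υ (x / n) : ℝ) : ℂ) * a x)
        (Icc (-(n:ℝ)) n) = 0 := by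
      refine eVariationOn.constant_on ?_
      rintro - ⟨x, hx, rfl⟩ - ⟨y, hy, rfl⟩
      rw [mem_Icc] at hx hy
      have h1 : υ (x / n) = 1 := hυ1 _ (by
        rw [abs_div, abs_of_pos hn0]; exact div_le_one_of_le₀ (abs_le.mpr hx) hn0.le)
      have h2 : υ (y / n) = 1 := hυ1 _ (by
        rw [abs_div, abs_of_pos hn0]; exact div_le_one_of_le₀ (abs_le.mpr hy) hn0.le)
      simp only [h1, h2, sub_self, Complex.ofReal_zero, zero_mul]
    have hright : eVariationOn (fun x : ℝ => ((1 - υ (x / n) : ℝ) : ℂ) * a x) (Ici (n:ℝ))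
        ≤ eVariationOn a (Ici (n:ℝ)) + δ * Cr := by
      have hg : ∀ x ∈ Ici (n:ℝ), ‖a x‖₊ ≤ δn := by
        intro x hx
        rw [← NNReal.coe_le_coe, coe_nnnorm, hδndef, Real.coe_toNNReal _ hδr.le]
        exact hax x (le_trans hx (le_abs_self x))
      calc eVariationOn (fun x : ℝ => ((1 - υ (x / n) : ℝ) : ℂ) * a x) (Ici (n:ℝ))
          ≤ (1 : ℝ≥0∞) * eVariationOn a (Ici (n:ℝ))
            + (δn : ℝ≥0∞) * eVariationOn (fun x : ℝ => (1 - υ (x / n) : ℝ)) (Ici (n:ℝ)) :=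
            myMul_le _ a _ 1 δn (hone _) hg
        _ ≤ eVariationOn a (Ici (n:ℝ)) + δ * Cr := by
            rw [one_mul, hδn]
            refine add_le_add_right (mul_le_mul_right ?_ δ) _
            refine hVn _ (Ici (1:ℝ)) fun x hx => ?_
            rw [mem_Ici] at hx ⊢
            rw [le_div_iff₀ hn0]
            linarith
    have hleft : eVariationOn (fun x : ℝ => ((1 - υ (x / n) : ℝ) : ℂ) * a x) (Iic (-(n:ℝ)))
        ≤ eVariationOn a (Iic (-(n:ℝ))) + δ * Cl := by
      have hg : ∀ x ∈ Iic (-(n:ℝ)), ‖a x‖₊ ≤ δn := by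
        intro x hx
        rw [mem_Iic] at hx
        rw [← NNReal.coe_le_coe, coe_nnnorm, hδndef, Real.coe_toNNReal _ hδr.le]
        refine hax x ?_
        rw [le_abs]
        right; linarith
      calc eVariationOn (fun x : ℝ => ((1 - υ (x / n) : ℝ) : ℂ) * a x) (Iic (-(n:ℝ)))
          ≤ (1 : ℝ≥0∞) * eVariationOn a (Iic (-(n:ℝ)))
            + (δn : ℝ≥0∞) * eVariationOn (fun x : ℝ => (1 - υ (x / n) : ℝ)) (Iic (-(n:ℝ))) :=
            myMul_le _ a _ 1 δn (hone _) hg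
        _ ≤ eVariationOn a (Iic (-(n:ℝ))) + δ * Cl := by
            rw [one_mul, hδn]
            refine add_le_add_right (mul_le_mul_right ?_ δ) _
            refine hVn _ (Iic (-1:ℝ)) fun x hx => ?_
            rw [mem_Iic] at hx ⊢
            rw [div_le_iff₀ hn0]
            linarith
    calc eVariationOn _ (Iic (-(n:ℝ))) + eVariationOn _ (Icc (-(n:ℝ)) n)
          + eVariationOn _ (Ici (n:ℝ))
        ≤ (eVariationOn a (Iic (-(n:ℝ))) + δ * Cl) + 0 + (eVariationOn a (Ici (n:ℝ)) + δ * Cr) :=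
          add_le_add (add_le_add hleft hmid.le) hright
      _ = (eVariationOn a (Iic (-(n:ℝ))) + eVariationOn a (Ici (n:ℝ))) + δ * (Cl + Cr) := by
          ring
      _ ≤ ε/2/2 + ε/2/2 :=
          add_le_add (hN₂ n hn2) (le_trans (mul_le_mul_left ((min_le_right _ _).trans
            (min_le_left _ _)) _) hηmul)
      _ = ε/2 := ENNReal.add_halves _
  calc ENNReal.ofReal (⨆ x : ℝ, ‖a x - (υ (x / n) : ℂ) * a x‖)
        + eVariationOn (fun x : ℝ => a x - (υ (x / n) : ℂ) * a x) univ
      ≤ ε/2 + ε/2 := add_le_add hA hB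
    _ = ε := ENNReal.add_halves ε
end

section
/- Let R₁, R₂ > 0 and let k : ℝ → ℂ be continuously differentiable with bounded derivative and with support contained in [−R₁, R₁]. Then the convolution operator K defined by (Kf)(x) := ∫_ℝ k(x−y) f(y) dy is a compact linear operator from the space of L¹ functions on ℝ supported in [−R₂, R₂] (equivalently, L¹ of the interval [−R₂, R₂]) to the Banach space C([−(R₁+R₂), R₁+R₂], ℂ) of continuous functions on [−(R₁+R₂), R₁+R₂] with the supremum norm. -/
open MeasureTheory


/-- A set of uniformly Lipschitz, uniformly bounded continuous functions on a compact
metric space is compact (Arzelà–Ascoli). -/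
lemma isCompact_lipschitz_ball {X : Type*} [MetricSpace X] [CompactSpace X] (L : NNReal) (M : ℝ) :
    IsCompact {g : C(X, ℂ) | LipschitzWith L g ∧ ∀ x, ‖g x‖ ≤ M} := by
  set S : Set C(X, ℂ) := {g : C(X, ℂ) | LipschitzWith L g ∧ ∀ x, ‖g x‖ ≤ M}
  set S₀ : Set (X → ℂ) := {g : X → ℂ | LipschitzWith L g ∧ ∀ x, ‖g x‖ ≤ M}
  have himg : ContinuousMap.toFun '' S = S₀ := by
    ext g
    constructor
    · rintro ⟨g', hg', rfl⟩; exact hg'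
    · rintro ⟨h1, h2⟩; exact ⟨⟨g, h1.continuous⟩, ⟨h1, h2⟩, rfl⟩
  apply ArzelaAscoli.isCompact_of_equicontinuous
  · rw [himg]
    have hclosed : IsClosed S₀ := by
      have : S₀ = (⋂ x, ⋂ y, {g : X → ℂ | dist (g x) (g y) ≤ (L : ℝ) * dist x y}) ∩
          ⋂ x, {g : X → ℂ | ‖g x‖ ≤ M} := by
        ext g
        simp only [Set.mem_setOf_eq, Set.mem_inter_iff, Set.mem_iInter,
          lipschitzWith_iff_dist_le_mul, S₀]
      rw [this]
      refine IsClosed.inter (isClosed_iInter fun x => isClosed_iInter fun y => ?_)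
        (isClosed_iInter fun x => ?_)
      · exact isClosed_le ((continuous_apply x).dist (continuous_apply y)) continuous_const
      · exact isClosed_le (continuous_apply x).norm continuous_const
    have hsub : S₀ ⊆ Set.pi Set.univ (fun _ : X => Metric.closedBall (0 : ℂ) M) := by
      rintro g ⟨_, h2⟩ x _
      simpa [Metric.mem_closedBall, dist_eq_norm] using h2 x
    exact (isCompact_univ_pi fun _ => isCompact_closedBall 0 M).of_isClosed_subset hclosed hsub
  · apply Metric.equicontinuous_of_continuity_modulus (fun t => (L : ℝ) * t)
    · exact (continuous_mul_left (L : ℝ)).tendsto' 0 0 (by simp)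
    · rintro x y ⟨g, hg⟩
      exact hg.1.dist_le_mul x y

/-- If `k` is continuously differentiable with bounded derivative and supported in
`[-R₁, R₁]`, then the convolution operator `f ↦ k ∗ f` is a compact operator from
`L¹([-R₂, R₂])` to `C([-(R₁+R₂), R₁+R₂])`. -/
theorem stmt6 (R₁ R₂ : ℝ) (hR₁ : 0 < R₁) (hR₂ : 0 < R₂) (k : ℝ → ℂ)
    (hk : ContDiff ℝ 1 k) (hk_bdd : ∃ C : ℝ, ∀ x : ℝ, ‖deriv k x‖ ≤ C)
    (hk_supp : Function.support k ⊆ Set.Icc (-R₁) R₁) :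
    ∃ T : Lp ℂ 1 (volume.restrict (Set.Icc (-R₂) R₂)) →L[ℂ]
        C(Set.Icc (-(R₁ + R₂)) (R₁ + R₂), ℂ),
      (∀ f : Lp ℂ 1 (volume.restrict (Set.Icc (-R₂) R₂)),
        ∀ x : Set.Icc (-(R₁ + R₂)) (R₁ + R₂),
          T f x = ∫ y : ℝ, k ((x : ℝ) - y) * f y ∂(volume.restrict (Set.Icc (-R₂) R₂))) ∧
      IsCompactOperator T := by
  set μ := volume.restrict (Set.Icc (-R₂) R₂) with hμ
  set I := Set.Icc (-(R₁ + R₂)) (R₁ + R₂) with hI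
  -- k is bounded
  have hksupp : HasCompactSupport k :=
    HasCompactSupport.of_support_subset_isCompact isCompact_Icc hk_supp
  obtain ⟨M, hM⟩ := hksupp.exists_bound_of_continuous hk.continuous
  have hM0 : 0 ≤ M := le_trans (norm_nonneg _) (hM 0)
  -- k is Lipschitz
  obtain ⟨C, hC⟩ := hk_bdd
  have hC0 : 0 ≤ C := le_trans (norm_nonneg _) (hC 0)
  have hlip : LipschitzWith C.toNNReal k := by
    apply lipschitzWith_of_nnnorm_deriv_le (hk.differentiable one_ne_zero)
    intro x
    rw [← NNReal.coe_le_coe]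
    exact (hC x).trans (Real.le_coe_toNNReal C)
  -- measurability / integrability facts
  have hmeas : ∀ x : ℝ, AEStronglyMeasurable (fun y : ℝ => k (x - y)) μ :=
    fun x => (hk.continuous.comp (continuous_const.sub continuous_id)).aestronglyMeasurable
  have hint : ∀ (f : Lp ℂ 1 μ) (x : ℝ),
      Integrable (fun y : ℝ => k (x - y) * (f : ℝ → ℂ) y) μ := by
    intro f x
    exact (L1.integrable_coeFn f).bdd_mul (hmeas x) (c := M) (Filter.Eventually.of_forall fun y => hM _)
  have hnormint : ∀ f : Lp ℂ 1 μ, Integrable (fun y : ℝ => ‖(f : ℝ → ℂ) y‖) μ :=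
    fun f => (L1.integrable_coeFn f).norm
  -- key pointwise bound
  have hbound : ∀ (f : Lp ℂ 1 μ) (x : ℝ),
      ‖∫ y : ℝ, k (x - y) * (f : ℝ → ℂ) y ∂μ‖ ≤ M * ‖f‖ := by
    intro f x
    rw [L1.norm_eq_integral_norm]
    calc ‖∫ y : ℝ, k (x - y) * (f : ℝ → ℂ) y ∂μ‖
        ≤ ∫ y : ℝ, M * ‖(f : ℝ → ℂ) y‖ ∂μ := by
          apply norm_integral_le_of_norm_le ((hnormint f).const_mul M)
          filter_upwards with y
          rw [norm_mul]
          exact mul_le_mul_of_nonneg_right (hM _) (norm_nonneg _)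
      _ = M * ∫ y : ℝ, ‖(f : ℝ → ℂ) y‖ ∂μ := integral_const_mul M _
  -- key Lipschitz bound
  have hlipb : ∀ (f : Lp ℂ 1 μ) (x x' : ℝ),
      dist (∫ y : ℝ, k (x - y) * (f : ℝ → ℂ) y ∂μ) (∫ y : ℝ, k (x' - y) * (f : ℝ → ℂ) y ∂μ)
        ≤ C * ‖f‖ * dist x x' := by
    intro f x x'
    rw [dist_eq_norm, ← integral_sub (hint f x) (hint f x'), L1.norm_eq_integral_norm]
    calc ‖∫ y : ℝ, (k (x - y) * (f : ℝ → ℂ) y - k (x' - y) * (f : ℝ → ℂ) y) ∂μ‖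
        ≤ ∫ y : ℝ, (C * dist x x') * ‖(f : ℝ → ℂ) y‖ ∂μ := by
          apply norm_integral_le_of_norm_le ((hnormint f).const_mul _)
          filter_upwards with y
          rw [← sub_mul, norm_mul]
          apply mul_le_mul_of_nonneg_right _ (norm_nonneg _)
          have := hlip.dist_le_mul (x - y) (x' - y)
          rw [dist_eq_norm] at this
          simpa [Real.coe_toNNReal C hC0, dist_eq_norm, sub_sub_sub_cancel_right] using this
      _ = (C * dist x x') * ∫ y : ℝ, ‖(f : ℝ → ℂ) y‖ ∂μ := integral_const_mul _ _
      _ = C * (∫ y : ℝ, ‖(f : ℝ → ℂ) y‖ ∂μ) * dist x x' := by ring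
  -- the continuous map associated to f
  have hcont : ∀ f : Lp ℂ 1 μ, Continuous (fun x : I => ∫ y : ℝ, k ((x : ℝ) - y) * (f : ℝ → ℂ) y ∂μ) := by
    intro f
    have : LipschitzWith (C * ‖f‖).toNNReal
        (fun x : I => ∫ y : ℝ, k ((x : ℝ) - y) * (f : ℝ → ℂ) y ∂μ) := by
      apply LipschitzWith.of_dist_le_mul
      intro x x'
      rw [Subtype.dist_eq]
      exact (hlipb f x x').trans
        (mul_le_mul_of_nonneg_right (Real.le_coe_toNNReal _) dist_nonneg)
    exact this.continuous
  -- build the linear map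
  set Tfun : Lp ℂ 1 μ → C(I, ℂ) :=
    fun f => ⟨fun x => ∫ y : ℝ, k ((x : ℝ) - y) * (f : ℝ → ℂ) y ∂μ, hcont f⟩ with hTfun
  have hadd : ∀ f g : Lp ℂ 1 μ, Tfun (f + g) = Tfun f + Tfun g := by
    intro f g
    ext x
    have hfg : ((f + g : Lp ℂ 1 μ) : ℝ → ℂ) =ᵐ[μ] (f : ℝ → ℂ) + (g : ℝ → ℂ) := Lp.coeFn_add f g
    simp only [hTfun, ContinuousMap.coe_mk, ContinuousMap.add_apply]
    rw [← integral_add (hint f x) (hint g x)]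
    apply integral_congr_ae
    filter_upwards [hfg] with y hy
    rw [hy, Pi.add_apply, mul_add]
  have hsmul : ∀ (c : ℂ) (f : Lp ℂ 1 μ), Tfun (c • f) = c • Tfun f := by
    intro c f
    ext x
    have hcf : ((c • f : Lp ℂ 1 μ) : ℝ → ℂ) =ᵐ[μ] c • (f : ℝ → ℂ) := Lp.coeFn_smul c f
    simp only [hTfun, ContinuousMap.coe_mk, ContinuousMap.smul_apply]
    rw [← integral_smul]
    apply integral_congr_ae
    filter_upwards [hcf] with y hy
    rw [hy, Pi.smul_apply, smul_eq_mul, smul_eq_mul]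
    ring
  have : Nonempty I := ⟨⟨0, by rw [hI, Set.mem_Icc]; constructor <;> nlinarith⟩⟩
  set Tlin : Lp ℂ 1 μ →ₗ[ℂ] C(I, ℂ) :=
    { toFun := Tfun, map_add' := hadd, map_smul' := hsmul } with hTlin
  have hTnorm : ∀ f : Lp ℂ 1 μ, ‖Tlin f‖ ≤ M * ‖f‖ := by
    intro f
    rw [ContinuousMap.norm_le _ (by positivity)]
    intro x
    exact hbound f x
  set T : Lp ℂ 1 μ →L[ℂ] C(I, ℂ) := LinearMap.mkContinuous Tlin M hTnorm with hT
  refine ⟨T, fun f x => rfl, ?_⟩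
  -- compactness
  refine ⟨{g : C(I, ℂ) | LipschitzWith C.toNNReal g ∧ ∀ x, ‖g x‖ ≤ M},
    isCompact_lipschitz_ball _ _, ?_⟩
  apply Filter.mem_of_superset (Metric.ball_mem_nhds 0 one_pos)
  intro f hf
  simp only [Metric.mem_ball, dist_zero_right] at hf
  have hf1 : ‖f‖ ≤ 1 := hf.le
  constructor
  · apply LipschitzWith.of_dist_le_mul
    intro x x'
    calc dist (T f x) (T f x') ≤ C * ‖f‖ * dist x x' := by
          rw [Subtype.dist_eq]; exact hlipb f x x'
      _ ≤ C.toNNReal * dist x x' := by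
          apply mul_le_mul_of_nonneg_right _ dist_nonneg
          rw [Real.coe_toNNReal C hC0]
          calc C * ‖f‖ ≤ C * 1 := mul_le_mul_of_nonneg_left hf1 hC0
            _ = C := mul_one C
  · intro x
    calc ‖T f x‖ ≤ M * ‖f‖ := hbound f x
      _ ≤ M * 1 := mul_le_mul_of_nonneg_left hf1 hM0
      _ = M := mul_one M
end
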